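/- arXiv:1201.0420 — 2 statements merged into one kernel-verified Lean document; each statement's English description precedes it below -/
import Mathlib

section
/- For all natural numbers n ≥ 1, the sum over k from 1 to n of k²·H_k·H_{n-k} equals n(n+1)(2n+1)/6 · [H_{n+1}² - H^{(2)}_{n+1} - (13n+5)/(3(2n+1))·H_{n+1} + (71n+37)/(18(2n+1))]. -/
open Finset BigOperators

def H (n : ℕ) : ℚ := ∑ i ∈ Finset.range n, 1 / (i + 1 : ℚ)

def H2 (n : ℕ) : ℚ := ∑ i ∈ Finset.range n, 1 / ((i + 1 : ℚ))^2

lemma Hsucc (n : ℕ) : H (n + 1) = H n + 1 / (n + 1 : ℚ) := by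
  simp [H, Finset.sum_range_succ]

lemma H2succ (n : ℕ) : H2 (n + 1) = H2 n + 1 / ((n + 1 : ℚ))^2 := by
  simp [H2, Finset.sum_range_succ]

lemma lemA (n : ℕ) : ∑ i ∈ Finset.range n, H (i + 1)
    = (n + 1) * H (n + 1) - (n + 1) := by
  induction n with
  | zero => simp [H]
  | succ n ih =>
    rw [Finset.sum_range_succ, ih, Hsucc (n+1)]
    have h : ((n : ℚ) + 1 + 1) ≠ 0 := by positivity
    push_cast
    field_simp
    ring

lemma lemB (n : ℕ) : ∑ i ∈ Finset.range n, ((i : ℚ) + 1) * H (i + 1)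
    = n * (n + 1) / 2 * H (n + 1) - n * (n + 1) / 4 := by
  induction n with
  | zero => simp [H]
  | succ n ih =>
    rw [Finset.sum_range_succ, ih, Hsucc (n+1)]
    have h : ((n : ℚ) + 1 + 1) ≠ 0 := by positivity
    push_cast
    field_simp
    ring

lemma lemD (n : ℕ) : ∑ i ∈ Finset.range (n + 1), 1 / (((i : ℚ) + 1) * ((n : ℚ) + 1 - i))
    = 2 * H (n + 1) / (n + 2) := by
  have key : ∀ i ∈ Finset.range (n + 1),
      1 / (((i : ℚ) + 1) * ((n : ℚ) + 1 - i))
        = 1 / ((n : ℚ) + 2) * (1 / ((i : ℚ) + 1) + 1 / ((n : ℚ) + 1 - i)) := by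
    intro i hi
    have hi' : (i : ℚ) ≤ n := by
      exact_mod_cast Nat.le_of_lt_succ (Finset.mem_range.mp hi)
    have h1 : ((i : ℚ) + 1) ≠ 0 := by positivity
    have h2 : ((n : ℚ) + 1 - i) ≠ 0 := by nlinarith
    field_simp
    ring
  rw [Finset.sum_congr rfl key, ← Finset.mul_sum, Finset.sum_add_distrib]
  have hrefl : ∑ i ∈ Finset.range (n + 1), 1 / ((n : ℚ) + 1 - i)
      = ∑ i ∈ Finset.range (n + 1), 1 / ((i : ℚ) + 1) := by
    rw [← Finset.sum_range_reflect (fun i => 1 / ((i : ℚ) + 1)) (n + 1)]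
    apply Finset.sum_congr rfl
    intro i hi
    have hle : i ≤ n := Nat.le_of_lt_succ (Finset.mem_range.mp hi)
    have : ((n + 1 - 1 - i : ℕ) : ℚ) = (n : ℚ) - i := by
      simp only [Nat.add_sub_cancel]
      push_cast [Nat.cast_sub hle]
      ring
    rw [this]
    ring_nf
  rw [hrefl]
  have : ∑ i ∈ Finset.range (n + 1), 1 / ((i : ℚ) + 1) = H (n + 1) := by
    simp [H]
  rw [this]
  ring

lemma lemC (n : ℕ) : ∑ i ∈ Finset.range n, H (n - i) / ((i : ℚ) + 1)
    = H (n + 1) ^ 2 - H2 (n + 1) := by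
  induction n with
  | zero => simp [H, H2]
  | succ n ih =>
    have split : ∀ i ∈ Finset.range (n + 1),
        H (n + 1 - i) / ((i : ℚ) + 1)
          = H (n - i) / ((i : ℚ) + 1) + 1 / (((i : ℚ) + 1) * ((n : ℚ) + 1 - i)) := by
      intro i hi
      have hle : i ≤ n := Nat.le_of_lt_succ (Finset.mem_range.mp hi)
      have h1 : n + 1 - i = (n - i) + 1 := by omega
      have h2 : ((n - i : ℕ) : ℚ) = (n : ℚ) - i := by push_cast [Nat.cast_sub hle]; ring
      rw [h1, Hsucc, h2]
      have hi' : (i : ℚ) ≤ n := by exact_mod_cast hle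
      have h3 : ((i : ℚ) + 1) ≠ 0 := by positivity
      have h4 : ((n : ℚ) - i + 1) ≠ 0 := by nlinarith
      have h5 : ((n : ℚ) + 1 - i) ≠ 0 := by nlinarith
      field_simp [h3, h4, h5]
      ring
    rw [Finset.sum_congr rfl split, Finset.sum_add_distrib]
    have first : ∑ i ∈ Finset.range (n + 1), H (n - i) / ((i : ℚ) + 1)
        = ∑ i ∈ Finset.range n, H (n - i) / ((i : ℚ) + 1) := by
      rw [Finset.sum_range_succ]
      simp [H]
    rw [first, ih, lemD, Hsucc (n+1), H2succ (n+1)]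
    have h : ((n : ℚ) + 1 + 1) ≠ 0 := by positivity
    push_cast
    field_simp
    ring

lemma lemCconv (n : ℕ) : ∑ i ∈ Finset.range n, H (i + 1) / ((n : ℚ) - i)
    = H (n + 1) ^ 2 - H2 (n + 1) := by
  rw [← lemC n, ← Finset.sum_range_reflect (fun i => H (n - i) / ((i : ℚ) + 1)) n]
  apply Finset.sum_congr rfl
  intro i hi
  have hlt : i < n := Finset.mem_range.mp hi
  have h1 : n - (n - 1 - i) = i + 1 := by omega
  have h2 : ((n - 1 - i : ℕ) : ℚ) = (n : ℚ) - 1 - i := by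
    have : (1:ℕ) + i ≤ n := by omega
    push_cast [Nat.cast_sub (by omega : i ≤ n - 1), Nat.cast_sub (by omega : 1 ≤ n)]
    ring
  simp only [h1, h2]
  ring_nf

lemma lemT (n : ℕ) : ∑ i ∈ Finset.range n, ((i : ℚ) + 1) ^ 2 * H (i + 1) / ((n : ℚ) - i)
    = ((n : ℚ) + 1) ^ 2 * (H (n + 1) ^ 2 - H2 (n + 1))
      - ((n : ℚ) + 1) * (((n : ℚ) + 1) * H (n + 1) - ((n : ℚ) + 1))
      - ((n : ℚ) * (n + 1) / 2 * H (n + 1) - (n : ℚ) * (n + 1) / 4) := by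
  have key : ∀ i ∈ Finset.range n,
      ((i : ℚ) + 1) ^ 2 * H (i + 1) / ((n : ℚ) - i)
        = ((n : ℚ) + 1) ^ 2 * (H (i + 1) / ((n : ℚ) - i))
          - 2 * ((n : ℚ) + 1) * H (i + 1)
          + (((n : ℚ) - i) * H (i + 1)) := by
    intro i hi
    have hlt : (i : ℚ) < n := by exact_mod_cast Finset.mem_range.mp hi
    have h2 : ((n : ℚ) - i) ≠ 0 := by nlinarith
    field_simp
    ring
  rw [Finset.sum_congr rfl key]
  rw [Finset.sum_add_distrib, Finset.sum_sub_distrib, ← Finset.mul_sum, ← Finset.mul_sum]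
  have e3 : ∑ i ∈ Finset.range n, ((n : ℚ) - i) * H (i + 1)
      = (n : ℚ) * (((n : ℚ) + 1) * H (n + 1) - ((n : ℚ) + 1))
        + (∑ i ∈ Finset.range n, H (i + 1))
        - (((n : ℚ) * (n + 1) / 2 * H (n + 1) - (n : ℚ) * (n + 1) / 4)
           + 0) := by
    have : ∀ i ∈ Finset.range n, ((n : ℚ) - i) * H (i + 1)
        = ((n : ℚ) + 1) * H (i + 1) - ((i : ℚ) + 1) * H (i + 1) := by
      intro i _; ring
    rw [Finset.sum_congr rfl this, Finset.sum_sub_distrib, ← Finset.mul_sum, lemA, lemB]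
    ring
  rw [lemCconv, lemA, e3, lemA]
  ring

lemma mainRange (n : ℕ) :
    ∑ i ∈ Finset.range n, ((i : ℚ) + 1) ^ 2 * H (i + 1) * H (n - 1 - i)
      = n * (n + 1) * (2 * n + 1) / 6
          * (H (n + 1) ^ 2 - H2 (n + 1)
            - (13 * n + 5) / (3 * (2 * n + 1)) * H (n + 1)
            + (71 * n + 37) / (18 * (2 * n + 1))) := by
  induction n with
  | zero => simp
  | succ n ih =>
    have step : ∑ i ∈ Finset.range (n + 1), ((i : ℚ) + 1) ^ 2 * H (i + 1) * H (n + 1 - 1 - i)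
        = (∑ i ∈ Finset.range n, ((i : ℚ) + 1) ^ 2 * H (i + 1) * H (n - 1 - i))
          + ∑ i ∈ Finset.range n, ((i : ℚ) + 1) ^ 2 * H (i + 1) / ((n : ℚ) - i) := by
      rw [Finset.sum_range_succ]
      have hlast : n + 1 - 1 - n = 0 := by omega
      rw [hlast]
      have hH0 : H 0 = 0 := by simp [H]
      simp only [hH0, mul_zero, add_zero]
      rw [← Finset.sum_add_distrib]
      apply Finset.sum_congr rfl
      intro i hi
      have hlt : i < n := Finset.mem_range.mp hi
      have h1 : n + 1 - 1 - i = (n - 1 - i) + 1 := by omega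
      have h2 : ((n - 1 - i : ℕ) : ℚ) = (n : ℚ) - 1 - i := by
        push_cast [Nat.cast_sub (by omega : i ≤ n - 1), Nat.cast_sub (by omega : 1 ≤ n)]
        ring
      rw [h1, Hsucc (n - 1 - i), h2]
      have hlt' : (i : ℚ) < n := by exact_mod_cast hlt
      have h3 : ((n : ℚ) - i) ≠ 0 := by nlinarith
      have h4 : ((n : ℚ) - 1 - i + 1) = (n : ℚ) - i := by ring
      rw [h4]
      field_simp [h3]
    rw [step, ih, lemT, Hsucc (n+1), H2succ (n+1)]
    have h1 : ((n : ℚ) + 1 + 1) ≠ 0 := by positivity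
    have h2 : (2 * (n : ℚ) + 1) ≠ 0 := by positivity
    have h3 : (2 * ((n : ℚ) + 1) + 1) ≠ 0 := by positivity
    push_cast
    field_simp
    ring

theorem stmt10 (n : ℕ) (hn : 1 ≤ n) :
    ∑ k ∈ Finset.Icc 1 n, (k : ℚ)^2 * H k * H (n - k)
      = n * (n + 1) * (2 * n + 1) / 6
          * (H (n + 1)^2 - H2 (n + 1)
            - (13 * n + 5) / (3 * (2 * n + 1)) * H (n + 1)
            + (71 * n + 37) / (18 * (2 * n + 1))) := by
  rw [← mainRange n]
  rw [show Finset.Icc 1 n = Finset.Ico 1 (n + 1) by rw [Finset.Ico_add_one_right_eq_Icc],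
    Finset.sum_Ico_eq_sum_range]
  simp only [Nat.add_sub_cancel]
  apply Finset.sum_congr rfl
  intro i hi
  have h : n - (1 + i) = n - 1 - i := by omega
  rw [h]
  push_cast
  ring_nf
end

section
/- For all natural numbers n ≥ 1, the sum over k from 1 to n of k³·H_k·H_{n-k} equals n²(n+1)²/4 · [H_{n+1}² - H^{(2)}_{n+1} - (7n+5)/(3(n+1))·H_{n+1} + (35n+37)/(18(n+1))]. -/
open Finset BigOperators

lemma H_succ (n : ℕ) : H (n+1) = H n + 1/((n:ℚ)+1) := by
  simp [H, Finset.sum_range_succ]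

lemma H2_succ (n : ℕ) : H2 (n+1) = H2 n + 1/((n:ℚ)+1)^2 := by
  simp [H2, Finset.sum_range_succ]

lemma H_one : H 1 = 1 := by simp [H]

lemma Icc_one_sum (n : ℕ) (f : ℕ → ℚ) :
    ∑ k ∈ Icc 1 n, f k = ∑ i ∈ range n, f (i+1) := by
  induction n with
  | zero => simp
  | succ n ih => rw [Finset.sum_Icc_succ_top (by omega), Finset.sum_range_succ, ih]

lemma sum_Icc_inv (n : ℕ) : ∑ k ∈ Icc 1 n, 1/(k:ℚ) = H n := by
  rw [Icc_one_sum, H]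
  apply Finset.sum_congr rfl
  intro i _; push_cast; ring_nf

lemma sum_Icc_one (n : ℕ) : ∑ _k ∈ Icc 1 n, (1:ℚ) = n := by
  simp [Nat.card_Icc]

lemma sum_Icc_id (n : ℕ) : ∑ k ∈ Icc 1 n, (k:ℚ) = n*(n+1)/2 := by
  induction n with
  | zero => simp
  | succ n ih => rw [Finset.sum_Icc_succ_top (by omega), ih]; push_cast; ring

lemma sum_Icc_reflect (n : ℕ) (f : ℕ → ℚ) :
    ∑ j ∈ Icc 1 n, f (n+1-j) = ∑ j ∈ Icc 1 n, f j := by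
  rw [Icc_one_sum, Icc_one_sum, ← Finset.sum_range_reflect]
  apply Finset.sum_congr rfl
  intro i hi; simp only [Finset.mem_range] at hi; congr 1; omega

lemma sum_Icc_shift (n : ℕ) (f : ℕ → ℚ) :
    ∑ k ∈ Icc 1 (n+1), f k = f 1 + ∑ j ∈ Icc 1 n, f (j+1) := by
  rw [Icc_one_sum, Icc_one_sum, Finset.sum_range_succ', add_comm]

lemma U0 (n : ℕ) : ∑ k ∈ Icc 1 n, H k / ((n+1-k : ℕ):ℚ)
    = H (n+1)^2 - H2 (n+1) := by
  induction n with
  | zero => simp [H, H2, Finset.sum_range_succ]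
  | succ n ih =>
    rw [sum_Icc_shift n (fun k => H k / ((n+1+1-k : ℕ):ℚ))]
    have e1 : H 1 / ((n+1+1-1 : ℕ):ℚ) = 1/((n:ℚ)+1) := by
      rw [H_one]; norm_num
    have e2 : ∑ j ∈ Icc 1 n, H (j+1) / ((n+1+1-(j+1) : ℕ):ℚ)
        = ∑ j ∈ Icc 1 n, (H j / ((n+1-j : ℕ):ℚ)
            + (1/((n:ℚ)+2)) * (1/((j:ℚ)+1) + 1/((n+1-j : ℕ):ℚ))) := by
      apply Finset.sum_congr rfl
      intro j hj
      simp only [Finset.mem_Icc] at hj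
      have h1 : n+1+1-(j+1) = n+1-j := by omega
      have h2 : ((n+1-j : ℕ):ℚ) = (n:ℚ)+1-j := by
        rw [Nat.cast_sub (by omega)]; push_cast; ring
      rw [h1, H_succ, h2]
      have hj1 : ((j:ℚ)+1) ≠ 0 := by positivity
      have hc : ((n:ℚ)+1-(j:ℚ)) ≠ 0 := by
        have : (j:ℚ) ≤ n := by exact_mod_cast hj.2
        intro h; nlinarith
      field_simp
      ring
    rw [e1, e2, Finset.sum_add_distrib, ih, ← Finset.mul_sum, Finset.sum_add_distrib]
    have e3 : ∑ j ∈ Icc 1 n, 1/((j:ℚ)+1) = H (n+1) - 1 := by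
      have := sum_Icc_shift n (fun k => 1/(k:ℚ))
      rw [sum_Icc_inv] at this
      have e : ∑ j ∈ Icc 1 n, 1/(((j+1):ℕ):ℚ) = ∑ j ∈ Icc 1 n, 1/((j:ℚ)+1) := by
        apply Finset.sum_congr rfl; intro j _; push_cast; ring
      rw [e] at this
      norm_num at this; simp only [one_div]; linarith
    have e4 : ∑ j ∈ Icc 1 n, 1/((n+1-j : ℕ):ℚ) = H n := by
      rw [sum_Icc_reflect n (fun l => 1/(l:ℚ)), sum_Icc_inv]
    rw [e3, e4]
    rw [H_succ (n+1), H2_succ (n+1), H_succ n]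
    have h1 : ((n:ℚ)+1) ≠ 0 := by positivity
    have h2 : ((n:ℚ)+1+1) ≠ 0 := by positivity
    push_cast
    field_simp
    ring

lemma U1 (n : ℕ) : ∑ k ∈ Icc 1 n, (k:ℚ) * H k / ((n+1-k : ℕ):ℚ)
    = ((n:ℚ)+1) * (H (n+1)^2 - H2 (n+1) - H (n+1) + 1) := by
  induction n with
  | zero => simp [H, H2, Finset.sum_range_succ]
  | succ n ih =>
    rw [sum_Icc_shift n (fun k => (k:ℚ) * H k / ((n+1+1-k : ℕ):ℚ))]
    have e1 : ((1:ℕ):ℚ) * H 1 / ((n+1+1-1 : ℕ):ℚ) = 1/((n:ℚ)+1) := by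
      rw [H_one]; norm_num
    have e2 : ∑ j ∈ Icc 1 n, ((j+1:ℕ):ℚ) * H (j+1) / ((n+1+1-(j+1) : ℕ):ℚ)
        = ∑ j ∈ Icc 1 n, ((j:ℚ) * H j / ((n+1-j : ℕ):ℚ)
            + H j / ((n+1-j : ℕ):ℚ) + 1/((n+1-j : ℕ):ℚ)) := by
      apply Finset.sum_congr rfl
      intro j hj
      simp only [Finset.mem_Icc] at hj
      have h1 : n+1+1-(j+1) = n+1-j := by omega
      have h2 : ((n+1-j : ℕ):ℚ) = (n:ℚ)+1-j := by
        rw [Nat.cast_sub (by omega)]; push_cast; ring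
      rw [h1, H_succ, h2]
      have hj1 : ((j:ℚ)+1) ≠ 0 := by positivity
      have hc : ((n:ℚ)+1-(j:ℚ)) ≠ 0 := by
        have : (j:ℚ) ≤ n := by exact_mod_cast hj.2
        intro h; nlinarith
      push_cast
      field_simp
    rw [e1, e2]
    simp only [Finset.sum_add_distrib]
    rw [ih, U0 n]
    have e4 : ∑ j ∈ Icc 1 n, 1/((n+1-j : ℕ):ℚ) = H n := by
      rw [sum_Icc_reflect n (fun l => 1/(l:ℚ)), sum_Icc_inv]
    rw [e4]
    rw [H_succ (n+1), H2_succ (n+1), H_succ n]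
    have h1 : ((n:ℚ)+1) ≠ 0 := by positivity
    have h2 : ((n:ℚ)+1+1) ≠ 0 := by positivity
    push_cast
    field_simp
    ring

lemma U2 (n : ℕ) : ∑ k ∈ Icc 1 n, (k:ℚ)^2 * H k / ((n+1-k : ℕ):ℚ)
    = ((n:ℚ)+1)^2 * (H (n+1)^2 - H2 (n+1))
      - ((n:ℚ)+1)*(3*n+2)/2 * H (n+1) + ((n:ℚ)+1)*(5*n+4)/4 := by
  induction n with
  | zero => simp [H, H2, Finset.sum_range_succ]
  | succ n ih =>
    rw [sum_Icc_shift n (fun k => (k:ℚ)^2 * H k / ((n+1+1-k : ℕ):ℚ))]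
    have e1 : ((1:ℕ):ℚ)^2 * H 1 / ((n+1+1-1 : ℕ):ℚ) = 1/((n:ℚ)+1) := by
      rw [H_one]; norm_num
    have e2 : ∑ j ∈ Icc 1 n, ((j+1:ℕ):ℚ)^2 * H (j+1) / ((n+1+1-(j+1) : ℕ):ℚ)
        = ∑ j ∈ Icc 1 n, ((j:ℚ)^2 * H j / ((n+1-j : ℕ):ℚ)
            + 2 * ((j:ℚ) * H j / ((n+1-j : ℕ):ℚ))
            + H j / ((n+1-j : ℕ):ℚ)
            + ((n:ℚ)+2) * (1/((n+1-j : ℕ):ℚ)) - 1) := by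
      apply Finset.sum_congr rfl
      intro j hj
      simp only [Finset.mem_Icc] at hj
      have h1 : n+1+1-(j+1) = n+1-j := by omega
      have h2 : ((n+1-j : ℕ):ℚ) = (n:ℚ)+1-j := by
        rw [Nat.cast_sub (by omega)]; push_cast; ring
      rw [h1, H_succ, h2]
      have hj1 : ((j:ℚ)+1) ≠ 0 := by positivity
      have hc : ((n:ℚ)+1-(j:ℚ)) ≠ 0 := by
        have : (j:ℚ) ≤ n := by exact_mod_cast hj.2
        intro h; nlinarith
      push_cast
      field_simp
      ring
    rw [e1, e2]
    simp only [Finset.sum_add_distrib, Finset.sum_sub_distrib, ← Finset.mul_sum]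
    rw [ih, U1 n, U0 n, sum_Icc_one]
    have e4 : ∑ j ∈ Icc 1 n, 1/((n+1-j : ℕ):ℚ) = H n := by
      rw [sum_Icc_reflect n (fun l => 1/(l:ℚ)), sum_Icc_inv]
    rw [e4]
    rw [H_succ (n+1), H2_succ (n+1), H_succ n]
    have h1 : ((n:ℚ)+1) ≠ 0 := by positivity
    have h2 : ((n:ℚ)+1+1) ≠ 0 := by positivity
    push_cast
    field_simp
    ring

lemma U3 (n : ℕ) : ∑ k ∈ Icc 1 n, (k:ℚ)^3 * H k / ((n+1-k : ℕ):ℚ)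
    = ((n:ℚ)+1)^3 * (H (n+1)^2 - H2 (n+1))
      - ((n:ℚ)+1)*(11*n^2+16*n+6)/6 * H (n+1)
      + ((n:ℚ)+1)*(49*n^2+86*n+36)/36 := by
  induction n with
  | zero => simp [H, H2, Finset.sum_range_succ]
  | succ n ih =>
    rw [sum_Icc_shift n (fun k => (k:ℚ)^3 * H k / ((n+1+1-k : ℕ):ℚ))]
    have e1 : ((1:ℕ):ℚ)^3 * H 1 / ((n+1+1-1 : ℕ):ℚ) = 1/((n:ℚ)+1) := by
      rw [H_one]; norm_num
    have e2 : ∑ j ∈ Icc 1 n, ((j+1:ℕ):ℚ)^3 * H (j+1) / ((n+1+1-(j+1) : ℕ):ℚ)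
        = ∑ j ∈ Icc 1 n, ((j:ℚ)^3 * H j / ((n+1-j : ℕ):ℚ)
            + 3 * ((j:ℚ)^2 * H j / ((n+1-j : ℕ):ℚ))
            + 3 * ((j:ℚ) * H j / ((n+1-j : ℕ):ℚ))
            + H j / ((n+1-j : ℕ):ℚ)
            + ((n:ℚ)+2)^2 * (1/((n+1-j : ℕ):ℚ)) - ((n:ℚ)+3) - (j:ℚ)) := by
      apply Finset.sum_congr rfl
      intro j hj
      simp only [Finset.mem_Icc] at hj
      have h1 : n+1+1-(j+1) = n+1-j := by omega
      have h2 : ((n+1-j : ℕ):ℚ) = (n:ℚ)+1-j := by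
        rw [Nat.cast_sub (by omega)]; push_cast; ring
      rw [h1, H_succ, h2]
      have hj1 : ((j:ℚ)+1) ≠ 0 := by positivity
      have hc : ((n:ℚ)+1-(j:ℚ)) ≠ 0 := by
        have : (j:ℚ) ≤ n := by exact_mod_cast hj.2
        intro h; nlinarith
      push_cast
      field_simp
      ring
    rw [e1, e2]
    simp only [Finset.sum_add_distrib, Finset.sum_sub_distrib, ← Finset.mul_sum]
    rw [ih, U2 n, U1 n, U0 n, sum_Icc_id]
    simp only [Finset.sum_const, Nat.card_Icc, Nat.add_sub_cancel, nsmul_eq_mul]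
    have e4 : ∑ j ∈ Icc 1 n, 1/((n+1-j : ℕ):ℚ) = H n := by
      rw [sum_Icc_reflect n (fun l => 1/(l:ℚ)), sum_Icc_inv]
    rw [e4]
    rw [H_succ (n+1), H2_succ (n+1), H_succ n]
    have h1 : ((n:ℚ)+1) ≠ 0 := by positivity
    have h2 : ((n:ℚ)+1+1) ≠ 0 := by positivity
    push_cast
    field_simp
    ring

lemma S_closed (n : ℕ) :
    ∑ k ∈ Finset.Icc 1 n, (k : ℚ)^3 * H k * H (n - k)
      = (n : ℚ)^2 * (n + 1)^2 / 4
          * (H (n + 1)^2 - H2 (n + 1)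
            - (7 * n + 5) / (3 * (n + 1)) * H (n + 1)
            + (35 * n + 37) / (18 * (n + 1))) := by
  induction n with
  | zero => simp
  | succ n ih =>
    rw [Finset.sum_Icc_succ_top (by omega)]
    have h0 : H (n + 1 - (n+1)) = 0 := by simp [H]
    rw [h0]
    have e2 : ∑ k ∈ Icc 1 n, (k:ℚ)^3 * H k * H (n+1-k)
        = ∑ k ∈ Icc 1 n, ((k:ℚ)^3 * H k * H (n-k)
            + (k:ℚ)^3 * H k / ((n+1-k : ℕ):ℚ)) := by
      apply Finset.sum_congr rfl
      intro k hk
      simp only [Finset.mem_Icc] at hk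
      have h1 : n+1-k = (n-k)+1 := by omega
      rw [h1, H_succ]
      push_cast
      ring
    rw [e2, Finset.sum_add_distrib, ih, U3 n]
    rw [H_succ (n+1), H2_succ (n+1)]
    have h1 : ((n:ℚ)+1) ≠ 0 := by positivity
    have h2 : ((n:ℚ)+1+1) ≠ 0 := by positivity
    push_cast
    field_simp
    ring

theorem stmt11 (n : ℕ) (hn : 1 ≤ n) :
    ∑ k ∈ Finset.Icc 1 n, (k : ℚ)^3 * H k * H (n - k)
      = (n : ℚ)^2 * (n + 1)^2 / 4
          * (H (n + 1)^2 - H2 (n + 1)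
            - (7 * n + 5) / (3 * (n + 1)) * H (n + 1)
            + (35 * n + 37) / (18 * (n + 1))) := S_closed n
end
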